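/- Let f₁, f₂ : Ω → ℝ̄ be functions on a bounded domain Ω with compactification Ω̄¹ such that lim_{Ω ∋ y → x} (f₁(y) − f₂(y)) = 0 for all x ∈ ∂¹Ω (limits in the topology of Ω̄¹). Then the upper Wiener solutions agree: uW f₁ = uW f₂, and likewise uZ f₁ = uZ f₂. -/

import Mathlib

open Filter Set

/-- The filter of approach to a point `x` of the compactification from within `Ω`. -/
def approach {X : Type*} [TopologicalSpace X] (Ω : Set X) (x : X) : Filter ↥Ω :=
  Filter.comap (Subtype.val : ↥Ω → X) (nhds x)

/-- An extended-real-valued function bounded from below by a real constant. -/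
def BddBelowE {α : Type*} (u : α → EReal) : Prop :=
  ∃ m : ℝ, ∀ y, (m : EReal) ≤ u y

/-- The upper Wiener class `U^W_f` of `f : Ω → ℝ̄`. -/
def upperWienerClass {X : Type*} [TopologicalSpace X] (Ω : Set X)
    (SH : (↥Ω → EReal) → Prop) (f : ↥Ω → EReal) : Set (↥Ω → EReal) :=
  {u | SH u ∧ BddBelowE u ∧
    ∃ K : Set X, IsCompact K ∧ K ⊆ Ω ∧ ∀ y : ↥Ω, (y : X) ∉ K → f y ≤ u y}

/-- The upper Wiener solution `uW f`. -/
noncomputable def uW {X : Type*} [TopologicalSpace X] (Ω : Set X)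
    (SH : (↥Ω → EReal) → Prop) (f : ↥Ω → EReal) : ↥Ω → EReal :=
  fun z => ⨅ u ∈ upperWienerClass Ω SH f, u z

/-- Adding a real constant is an order isomorphism of `EReal`. -/
noncomputable def addOrderIso (c : ℝ) : EReal ≃o EReal where
  toFun x := x + c
  invFun x := x - c
  left_inv x := EReal.add_sub_cancel_right
  right_inv x := EReal.sub_add_cancel
  map_rel_iff' := (EReal.addLECancellable_coe c).add_le_add_iff_right

lemma le_of_forall_le_add' {a b : EReal} (h : ∀ ε : ℝ, 0 < ε → a ≤ b + ε) : a ≤ b := by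
  refine EReal.le_of_forall_lt_iff_le.1 fun z hz => ?_
  induction b using EReal.rec with
  | bot =>
      have := h 1 one_pos
      simp only [EReal.bot_add] at this
      exact this.trans bot_le
  | coe b =>
      have hb : b < z := by exact_mod_cast hz
      have := h (z - b) (by linarith)
      calc a ≤ (b : EReal) + ((z - b : ℝ) : EReal) := this
        _ = ((b + (z - b) : ℝ) : EReal) := by rw [← EReal.coe_add]
        _ = (z : EReal) := by norm_num
  | top => exact absurd hz (not_lt.2 le_top)

lemma both_ineq {a b : EReal} {ε : ℝ}
    (h₁ : -(ε : EReal) < a - b) (h₂ : a - b < (ε : EReal)) :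
    a ≤ b + (ε : EReal) ∧ b ≤ a + (ε : EReal) := by
  induction a using EReal.rec <;> induction b using EReal.rec <;>
    simp_all [sub_eq_add_neg, ← EReal.coe_neg, ← EReal.coe_add] <;>
    constructor <;> linarith

/-- Key comparison lemma: if `f₁ ≤ f₂ + ε` off a compact set for every `ε > 0`, then
`uW f₁ ≤ uW f₂` pointwise, for any shift-invariant class `P`. -/
lemma uW_le_uW {X : Type*} [TopologicalSpace X] (Ω : Set X)
    (P : (↥Ω → EReal) → Prop)
    (hshift : ∀ (u : ↥Ω → EReal) (c : ℝ), P u → P (fun y => u y + (c : EReal)))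
    (f₁ f₂ : ↥Ω → EReal)
    (hK : ∀ ε : ℝ, 0 < ε → ∃ K : Set X, IsCompact K ∧ K ⊆ Ω ∧
      ∀ y : ↥Ω, (y : X) ∉ K → f₁ y ≤ f₂ y + (ε : EReal))
    (z : ↥Ω) : uW Ω P f₁ z ≤ uW Ω P f₂ z := by
  apply le_of_forall_le_add'
  intro ε hε
  obtain ⟨K₀, hK₀c, hK₀Ω, hK₀⟩ := hK ε hε
  have hrw : (⨅ u ∈ upperWienerClass Ω P f₂, u z) + (ε : EReal) =
      ⨅ u ∈ upperWienerClass Ω P f₂, (u z + (ε : EReal)) := by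
    rw [iInf_subtype', iInf_subtype']
    exact (addOrderIso ε).map_iInf _
  show uW Ω P f₁ z ≤ (⨅ u ∈ upperWienerClass Ω P f₂, u z) + (ε : EReal)
  rw [hrw]
  refine le_iInf₂ fun u hu => ?_
  obtain ⟨hP, ⟨m, hm⟩, K, hKc, hKΩ, hKf⟩ := hu
  refine iInf₂_le_of_le (fun y => u y + (ε : EReal)) ?_ le_rfl
  refine ⟨hshift u ε hP, ⟨m, fun y => (hm y).trans (le_add_of_nonneg_right ?_)⟩,
    K ∪ K₀, hKc.union hK₀c, union_subset hKΩ hK₀Ω, fun y hy => ?_⟩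
  · exact_mod_cast hε.le
  · exact (hK₀ y (fun h => hy (mem_union_right _ h))).trans
      (add_le_add_left (hKf y (fun h => hy (mem_union_left _ h))) _)

theorem stmt_16 {X : Type*} [TopologicalSpace X] [CompactSpace X] [T2Space X]
    (Ω : Set X) (hopen : IsOpen Ω) (hdense : Dense Ω) (hne : Ω.Nonempty)
    (SH Dp : (↥Ω → EReal) → Prop)
    (hshiftSH : ∀ (u : ↥Ω → EReal) (c : ℝ), SH u → SH (fun y => u y + (c : EReal)))
    (hshiftDp : ∀ (u : ↥Ω → EReal) (c : ℝ), Dp u → Dp (fun y => u y + (c : EReal)))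
    (f₁ f₂ : ↥Ω → EReal)
    (hlim : ∀ x : X, x ∉ Ω →
      Tendsto (fun y : ↥Ω => f₁ y - f₂ y) (approach Ω x) (nhds (0 : EReal))) :
    (∀ z, uW Ω SH f₁ z = uW Ω SH f₂ z) ∧
    (∀ z, uW Ω (fun u => SH u ∧ Dp u) f₁ z = uW Ω (fun u => SH u ∧ Dp u) f₂ z) := by
  -- From the boundary limits and compactness, build the compact exceptional sets.
  have hKboth : ∀ ε : ℝ, 0 < ε → ∃ K : Set X, IsCompact K ∧ K ⊆ Ω ∧
      ∀ y : ↥Ω, (y : X) ∉ K →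
        (f₁ y ≤ f₂ y + (ε : EReal) ∧ f₂ y ≤ f₁ y + (ε : EReal)) := by
    intro ε hε
    have h0 : (0 : EReal) ∈ Ioo (-(ε : EReal)) (ε : EReal) := by
      constructor
      · rw [← EReal.coe_neg]; exact_mod_cast by linarith
      · exact_mod_cast hε
    have key : ∀ x : X, ∃ V : Set X, V ∈ nhds x ∧
        (x ∈ Ω ∨ ∀ y : ↥Ω, (y : X) ∈ V →
          f₁ y - f₂ y ∈ Ioo (-(ε : EReal)) (ε : EReal)) := by
      intro x
      by_cases hx : x ∈ Ω
      · exact ⟨univ, univ_mem, Or.inl hx⟩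
      · have := hlim x hx (isOpen_Ioo.mem_nhds h0)
        rw [approach] at this
        rw [Filter.mem_map, Filter.mem_comap] at this
        obtain ⟨V, hV, hsub⟩ := this
        exact ⟨V, hV, Or.inr fun y hy => hsub hy⟩
    choose V hVmem hV using key
    have hFc : IsCompact Ωᶜ := hopen.isClosed_compl.isCompact
    obtain ⟨t, htF, hcov⟩ := hFc.elim_nhds_subcover (fun x => interior (V x))
      (fun x _ => interior_mem_nhds.2 (hVmem x))
    refine ⟨(⋃ x ∈ t, interior (V x))ᶜ, ?_, ?_, ?_⟩
    · exact (isOpen_biUnion fun x _ => isOpen_interior).isClosed_compl.isCompact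
    · intro z hz
      by_contra hzΩ
      exact hz (hcov hzΩ)
    · intro y hy
      rw [mem_compl_iff, not_not, mem_iUnion₂] at hy
      obtain ⟨x, hxt, hyV⟩ := hy
      have hxF : x ∉ Ω := htF x hxt
      have hmem := ((hV x).resolve_left hxF) y (interior_subset hyV)
      exact both_ineq hmem.1 hmem.2
  have hK₁₂ : ∀ ε : ℝ, 0 < ε → ∃ K : Set X, IsCompact K ∧ K ⊆ Ω ∧
      ∀ y : ↥Ω, (y : X) ∉ K → f₁ y ≤ f₂ y + (ε : EReal) := fun ε hε => by
    obtain ⟨K, h1, h2, h3⟩ := hKboth ε hε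
    exact ⟨K, h1, h2, fun y hy => (h3 y hy).1⟩
  have hK₂₁ : ∀ ε : ℝ, 0 < ε → ∃ K : Set X, IsCompact K ∧ K ⊆ Ω ∧
      ∀ y : ↥Ω, (y : X) ∉ K → f₂ y ≤ f₁ y + (ε : EReal) := fun ε hε => by
    obtain ⟨K, h1, h2, h3⟩ := hKboth ε hε
    exact ⟨K, h1, h2, fun y hy => (h3 y hy).2⟩
  constructor
  · intro z
    exact le_antisymm (uW_le_uW Ω SH hshiftSH f₁ f₂ hK₁₂ z)
      (uW_le_uW Ω SH hshiftSH f₂ f₁ hK₂₁ z)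
  · intro z
    have hshift : ∀ (u : ↥Ω → EReal) (c : ℝ), (SH u ∧ Dp u) →
        (SH (fun y => u y + (c : EReal)) ∧ Dp (fun y => u y + (c : EReal))) :=
      fun u c hu => ⟨hshiftSH u c hu.1, hshiftDp u c hu.2⟩
    exact le_antisymm (uW_le_uW Ω _ hshift f₁ f₂ hK₁₂ z)
      (uW_le_uW Ω _ hshift f₂ f₁ hK₂₁ z)
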